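/- Fix reals 0 < R₁ < R₂ < R, α > 0, P_T > 0, 𝒩 > 0, γ > 0 and reflection coefficients 0 < ξ₂ ≤ ξ₁ ≤ 1; set κ = ξ₂/ξ₁. Let r₁ on [R₁, R₂] with density 2r/(R₂² − R₁²) and r₂ on [R₂, R] with density 2r/(R² − R₂²) be independent random variables, and let p₂ = P( P_T·ξ₁·r₁^{−2α}/(P_T·ξ₂·r₂^{−2α} + 𝒩) ≥ γ and P_T·ξ₂·r₂^{−2α}/𝒩 ≥ γ ). If γ < P_T·ξ₂·R₂^{−2α}/𝒩 and γ ≤ R₂^{−2α} / (κ·R₂^{−2α} + 𝒩/(ξ₁·P_T)), then p₂ = ( (max{R^{−2α}, 𝒩·γ/(ξ₂·P_T)})^{−1/α} − R₂² ) / (R² − R₂²). -/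

import Mathlib

open MeasureTheory Set

/-- Two-node pairing, fading-free, with `κ = ξ₂/ξ₁`. `p₂` is the
probability (double integral of the joint density of `r₁`, `r₂` over the success
event) that both paired nodes are decoded. If `γ < P_T·ξ₂·R₂^{−2α}/𝒩` and
`γ ≤ R₂^{−2α}/(κ·R₂^{−2α} + 𝒩/(ξ₁P_T))`, then
`p₂ = ((max{R^{−2α}, 𝒩γ/(ξ₂P_T)})^{−1/α} − R₂²)/(R² − R₂²)`. -/
theorem backcom_p2_second_case_formula
    (R₁ R₂ R α PT Noise γ ξ₁ ξ₂ κ : ℝ)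
    (h0 : 0 < R₁) (h12 : R₁ < R₂) (h2R : R₂ < R)
    (hα : 0 < α) (hPT : 0 < PT) (hNoise : 0 < Noise) (hγ : 0 < γ)
    (hξ2 : 0 < ξ₂) (hξ21 : ξ₂ ≤ ξ₁) (hξ1 : ξ₁ ≤ 1)
    (hκ : κ = ξ₂ / ξ₁)
    (hcond1 : γ < PT * ξ₂ * R₂ ^ (-(2 * α)) / Noise)
    (hcond2 : γ ≤ R₂ ^ (-(2 * α)) / (κ * R₂ ^ (-(2 * α)) + Noise / (ξ₁ * PT))) :
    (∫ r₁ in R₁..R₂, ∫ r₂ in R₂..R,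
        if γ ≤ PT * ξ₁ * r₁ ^ (-(2 * α)) / (PT * ξ₂ * r₂ ^ (-(2 * α)) + Noise) ∧
            γ ≤ PT * ξ₂ * r₂ ^ (-(2 * α)) / Noise
        then 2 * r₁ / (R₂ ^ 2 - R₁ ^ 2) * (2 * r₂ / (R ^ 2 - R₂ ^ 2)) else 0) =
      ((max (R ^ (-(2 * α))) (Noise * γ / (ξ₂ * PT))) ^ (-(1 / α)) - R₂ ^ 2) /
        (R ^ 2 - R₂ ^ 2) := by
  have hξ1pos : 0 < ξ₁ := lt_of_lt_of_le hξ2 hξ21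
  have hR2 : 0 < R₂ := h0.trans h12
  have hR : 0 < R := hR2.trans h2R
  have he : -(2 * α) < 0 := by nlinarith
  set e : ℝ := -(2 * α) with hedef
  set B : ℝ := Noise * γ / (ξ₂ * PT) with hBdef
  have hB : 0 < B := by positivity
  set c : ℝ := B ^ e⁻¹ with hcdef
  have hc : 0 < c := Real.rpow_pos_of_pos hB _
  have hcB : c ^ e = B := Real.rpow_inv_rpow hB.le he.ne
  -- B < R₂ ^ e
  have hBR₂ : B < R₂ ^ e := by
    rw [hBdef, div_lt_iff₀ (by positivity)]
    rw [lt_div_iff₀ hNoise] at hcond1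
    nlinarith [Real.rpow_pos_of_pos hR2 e]
  -- R₂ < c
  have hR₂c : R₂ < c := by
    rw [hcdef, Real.lt_rpow_inv_iff_of_neg hR2 hB he]
    exact hBR₂
  set m : ℝ := min R c with hmdef
  have hm : 0 < m := lt_min hR hc
  have hR₂m : R₂ < m := lt_min h2R hR₂c
  have hmR : m ≤ R := min_le_left _ _
  -- condition 1 always holds on the domain
  have hc1 : ∀ r₁ ∈ Icc R₁ R₂, ∀ r₂ ∈ Icc R₂ R,
      γ ≤ PT * ξ₁ * r₁ ^ e / (PT * ξ₂ * r₂ ^ e + Noise) := by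
    intro r₁ hr₁ r₂ hr₂
    have hr₁0 : 0 < r₁ := lt_of_lt_of_le h0 hr₁.1
    have hr₂0 : 0 < r₂ := lt_of_lt_of_le hR2 hr₂.1
    have h1 : R₂ ^ e ≤ r₁ ^ e :=
      (Real.rpow_le_rpow_iff_of_neg hR2 hr₁0 he).mpr hr₁.2
    have h2 : r₂ ^ e ≤ R₂ ^ e :=
      (Real.rpow_le_rpow_iff_of_neg hr₂0 hR2 he).mpr hr₂.1
    have hden : 0 < PT * ξ₂ * r₂ ^ e + Noise := by
      have := Real.rpow_pos_of_pos hr₂0 e; positivity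
    have hcond2' : γ ≤ PT * ξ₁ * R₂ ^ e / (PT * ξ₂ * R₂ ^ e + Noise) := by
      have hR2e : 0 < R₂ ^ e := Real.rpow_pos_of_pos hR2 e
      have : κ * R₂ ^ e + Noise / (ξ₁ * PT) = (PT * ξ₂ * R₂ ^ e + Noise) / (ξ₁ * PT) := by
        rw [hκ]; field_simp
      rw [this, div_div_eq_mul_div] at hcond2
      exact hcond2.trans_eq (by ring)
    refine hcond2'.trans ?_
    gcongr
  -- condition 2 equivalence
  have hc2 : ∀ r₂ ∈ Icc R₂ R, ((γ ≤ PT * ξ₂ * r₂ ^ e / Noise) ↔ r₂ ≤ m) := by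
    intro r₂ hr₂
    have hr₂0 : 0 < r₂ := lt_of_lt_of_le hR2 hr₂.1
    have h1 : (γ ≤ PT * ξ₂ * r₂ ^ e / Noise) ↔ B ≤ r₂ ^ e := by
      rw [hBdef, le_div_iff₀ hNoise, div_le_iff₀ (by positivity)]
      constructor <;> intro h <;> nlinarith
    rw [h1, ← Real.le_rpow_inv_iff_of_neg hr₂0 hB he, ← hcdef, hmdef, le_min_iff]
    exact ⟨fun h => ⟨hr₂.2, h⟩, fun h => h.2⟩
  have hCne : R ^ 2 - R₂ ^ 2 ≠ 0 := by nlinarith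
  have hC1ne : R₂ ^ 2 - R₁ ^ 2 ≠ 0 := by nlinarith
  set K : ℝ := (m ^ 2 - R₂ ^ 2) / (R ^ 2 - R₂ ^ 2) with hKdef
  have key : EqOn (fun r₁ => ∫ r₂ in R₂..R,
      if γ ≤ PT * ξ₁ * r₁ ^ e / (PT * ξ₂ * r₂ ^ e + Noise) ∧
          γ ≤ PT * ξ₂ * r₂ ^ e / Noise
      then 2 * r₁ / (R₂ ^ 2 - R₁ ^ 2) * (2 * r₂ / (R ^ 2 - R₂ ^ 2)) else 0)
      (fun r₁ => 2 * r₁ / (R₂ ^ 2 - R₁ ^ 2) * K) (uIcc R₁ R₂) := by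
    intro r₁ hr₁
    rw [uIcc_of_le h12.le] at hr₁
    have step1 : EqOn (fun r₂ =>
        if γ ≤ PT * ξ₁ * r₁ ^ e / (PT * ξ₂ * r₂ ^ e + Noise) ∧
            γ ≤ PT * ξ₂ * r₂ ^ e / Noise
        then 2 * r₁ / (R₂ ^ 2 - R₁ ^ 2) * (2 * r₂ / (R ^ 2 - R₂ ^ 2)) else 0)
        (indicator {x | x ≤ m}
          (fun r₂ => 2 * r₁ / (R₂ ^ 2 - R₁ ^ 2) * (2 * r₂ / (R ^ 2 - R₂ ^ 2))))
        (uIcc R₂ R) := by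
      intro r₂ hr₂
      rw [uIcc_of_le h2R.le] at hr₂
      rw [Set.indicator_apply]
      refine if_congr ?_ rfl rfl
      simp only [mem_setOf_eq]
      exact ⟨fun h => (hc2 _ hr₂).1 h.2, fun h => ⟨hc1 _ hr₁ _ hr₂, (hc2 _ hr₂).2 h⟩⟩
    simp only
    rw [intervalIntegral.integral_congr step1,
      intervalIntegral.integral_indicator ⟨hR₂m.le, hmR⟩]
    have : ∀ r₂ : ℝ, 2 * r₁ / (R₂ ^ 2 - R₁ ^ 2) * (2 * r₂ / (R ^ 2 - R₂ ^ 2)) =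
        (2 * r₁ / (R₂ ^ 2 - R₁ ^ 2) * (2 / (R ^ 2 - R₂ ^ 2))) * r₂ := fun _ => by ring
    simp_rw [this]
    rw [intervalIntegral.integral_const_mul, integral_id, hKdef]
    ring
  rw [intervalIntegral.integral_congr key]
  have : ∀ r₁ : ℝ, 2 * r₁ / (R₂ ^ 2 - R₁ ^ 2) * K =
      (2 / (R₂ ^ 2 - R₁ ^ 2) * K) * r₁ := fun _ => by ring
  simp_rw [this]
  rw [intervalIntegral.integral_const_mul, integral_id]
  have hmax : max (R ^ e) B = m ^ e := by
    rcases le_total R c with h | h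
    · rw [hmdef, min_eq_left h, max_eq_left]
      rw [← hcB]
      exact (Real.rpow_le_rpow_iff_of_neg hc hR he).mpr h
    · rw [hmdef, min_eq_right h, hcB, max_eq_right]
      rw [← hcB]
      exact (Real.rpow_le_rpow_iff_of_neg hR hc he).mpr h
  rw [hmax]
  have hexp : (m ^ e) ^ (-(1 / α)) = m ^ 2 := by
    rw [← Real.rpow_natCast m 2, ← Real.rpow_mul hm.le]
    congr 1
    rw [hedef]
    push_cast
    field_simp
  rw [show (2 / (R₂ ^ 2 - R₁ ^ 2) * K) * ((R₂ ^ 2 - R₁ ^ 2) / 2)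
      = K * ((R₂ ^ 2 - R₁ ^ 2) / (R₂ ^ 2 - R₁ ^ 2)) from by ring,
    div_self hC1ne, mul_one, hexp, hKdef]
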